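/- Let A be a unital C*-algebra and x : A → Mₙ an irreducible representation. Suppose x, viewed as a point of the nc state space, is written as a finite nc convex combination x = ∑ᵢ αᵢ* xᵢ αᵢ where each xᵢ : A → M_{nᵢ} is unital completely positive and ∑ αᵢ* αᵢ = 1ₙ with each αᵢ ≠ 0. Then each αᵢ is a positive scalar multiple of an isometry βᵢ ∈ M_{nᵢ,n} with βᵢ* xᵢ(a) βᵢ = x(a) for all a ∈ A. -/

import Mathlib

open ContinuousLinearMap

noncomputable section

/-- Complete positivity for a linear map from a C*-algebra into the bounded
operators on a finite-dimensional Hilbert space, positivity being witnessed by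
factorizations `star y * y`. -/
def IsCPinto {A : Type*} [NormedRing A] [StarRing A] [CStarRing A]
    [NormedAlgebra ℂ A] [StarModule ℂ A] [CompleteSpace A]
    {H : Type*} [NormedAddCommGroup H] [InnerProductSpace ℂ H] [CompleteSpace H]
    (τ : A →ₗ[ℂ] (H →L[ℂ] H)) : Prop :=
  ∀ (k : ℕ) (x : Matrix (Fin k) (Fin k) A),
    (∃ y : Matrix (Fin k) (Fin k) A, x = star y * y) →
    ∃ c : Matrix (Fin k) (Fin k) (H →L[ℂ] H), x.map τ = star c * c

section Aux

set_option linter.unusedSectionVars false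

variable {A : Type*} [NormedRing A] [StarRing A] [CStarRing A]
    [NormedAlgebra ℂ A] [StarModule ℂ A] [CompleteSpace A]
    {H : Type*} [NormedAddCommGroup H] [InnerProductSpace ℂ H] [CompleteSpace H]

local notation "⟪" x ", " y "⟫" => @inner ℂ _ _ x y

lemma schwarz_matrix_fact (a : A) :
    (!![1, a; star a, star a * a] : Matrix (Fin 2) (Fin 2) A)
      = star !![1, a; 0, 0] * !![1, a; 0, 0] := by
  ext p q
  fin_cases p <;> fin_cases q <;>
    simp [Matrix.mul_apply, Fin.sum_univ_two, Matrix.star_apply]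

lemma cp_star_map (τ : A →ₗ[ℂ] (H →L[ℂ] H)) (hcp : IsCPinto τ) (a : A) :
    τ (star a) = star (τ a) := by
  obtain ⟨c, hc⟩ := hcp 2 !![1, a; star a, star a * a] ⟨_, schwarz_matrix_fact a⟩
  have hsa : star ((!![1, a; star a, star a * a]).map τ)
      = (!![1, a; star a, star a * a]).map τ := by
    rw [hc, star_mul, star_star]
  have h2 : star (τ (star a)) = τ a := by
    simpa [Matrix.star_apply, Matrix.map_apply] using congrFun (congrFun hsa 0) 1
  rw [← h2, star_star]

lemma qf_nonneg {k : ℕ} (c : Matrix (Fin k) (Fin k) (H →L[ℂ] H)) (v : Fin k → H) :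
    0 ≤ (∑ p, ∑ q, ⟪((star c * c) p q) (v q), v p⟫).re := by
  have h : ∀ p q : Fin k, ((star c * c) p q) (v q) = ∑ r, adjoint (c r p) ((c r q) (v q)) := by
    intro p q
    simp [Matrix.mul_apply, Matrix.star_apply, ContinuousLinearMap.star_eq_adjoint,
      ContinuousLinearMap.sum_apply, ContinuousLinearMap.mul_apply]
  have key : (∑ p, ∑ q, ⟪((star c * c) p q) (v q), v p⟫)
      = ∑ r, ⟪∑ j, (c r j) (v j), ∑ j, (c r j) (v j)⟫ := by
    calc (∑ p, ∑ q, ⟪((star c * c) p q) (v q), v p⟫)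
        = ∑ p, ∑ q, ∑ r, ⟪(c r q) (v q), (c r p) (v p)⟫ := by
          simp only [h, sum_inner, adjoint_inner_left]
      _ = ∑ p, ∑ r, ∑ q, ⟪(c r q) (v q), (c r p) (v p)⟫ :=
          Finset.sum_congr rfl fun p _ => Finset.sum_comm
      _ = ∑ r, ∑ p, ∑ q, ⟪(c r q) (v q), (c r p) (v p)⟫ := Finset.sum_comm
      _ = ∑ r, ⟪∑ j, (c r j) (v j), ∑ j, (c r j) (v j)⟫ := by
          refine Finset.sum_congr rfl fun r _ => ?_
          rw [inner_sum]
          exact Finset.sum_congr rfl fun p _ => (sum_inner _ _ _).symm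
  rw [key, Complex.re_sum]
  exact Finset.sum_nonneg fun r _ => @inner_self_nonneg ℂ _ _ _ _ _

lemma cp_schwarz (τ : A →ₗ[ℂ] (H →L[ℂ] H)) (h1 : τ 1 = 1) (hcp : IsCPinto τ)
    (a : A) (η : H) : ‖τ a η‖ ^ 2 ≤ (⟪τ (star a * a) η, η⟫).re := by
  obtain ⟨c, hc⟩ := hcp 2 _ ⟨_, schwarz_matrix_fact a⟩
  have h0 := qf_nonneg c ![-(τ a η), η]
  rw [← hc] at h0
  have hexp : (∑ p, ∑ q, ⟪(((!![1, a; star a, star a * a]).map τ) p q)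
        ((![-(τ a η), η]) q), (![-(τ a η), η]) p⟫)
      = ⟪τ (star a * a) η, η⟫ - ⟪τ a η, τ a η⟫ := by
    simp [Fin.sum_univ_two, Matrix.map_apply, h1, cp_star_map τ hcp a,
      ContinuousLinearMap.star_eq_adjoint, adjoint_inner_left,
      inner_neg_neg, inner_neg_left, inner_neg_right]
    ring
  rw [hexp, Complex.sub_re] at h0
  have : (⟪τ a η, τ a η⟫).re = ‖τ a η‖ ^ 2 := by
    simpa using @inner_self_eq_norm_sq ℂ _ _ _ _ ((τ a) η)
  linarith

end Aux

set_option maxHeartbeats 1000000 in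
theorem irreducible_representation_is_pure
    {A : Type*} [NormedRing A] [StarRing A] [CStarRing A]
    [NormedAlgebra ℂ A] [StarModule ℂ A] [CompleteSpace A]
    {n : ℕ}
    (x : A →⋆ₐ[ℂ] (EuclideanSpace ℂ (Fin n) →L[ℂ] EuclideanSpace ℂ (Fin n)))
    -- irreducibility: no nontrivial invariant subspaces
    (hirr : ∀ U : Submodule ℂ (EuclideanSpace ℂ (Fin n)),
      (∀ a : A, ∀ v ∈ U, x a v ∈ U) → U = ⊥ ∨ U = ⊤)
    (k : ℕ) (ns : Fin k → ℕ)
    (xs : ∀ i, A →ₗ[ℂ] (EuclideanSpace ℂ (Fin (ns i)) →L[ℂ] EuclideanSpace ℂ (Fin (ns i))))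
    (hxs1 : ∀ i, xs i 1 = 1) (hxscp : ∀ i, IsCPinto (xs i))
    (α : ∀ i, EuclideanSpace ℂ (Fin n) →L[ℂ] EuclideanSpace ℂ (Fin (ns i)))
    (hα0 : ∀ i, α i ≠ 0)
    (hsum : (∑ i, (adjoint (α i)) ∘L (α i)) = 1)
    (hcomb : ∀ a : A, x a = ∑ i, (adjoint (α i)) ∘L (xs i a) ∘L (α i)) :
    ∀ i, ∃ (c : ℝ) (β : EuclideanSpace ℂ (Fin n) →L[ℂ] EuclideanSpace ℂ (Fin (ns i))),
      0 < c ∧ (adjoint β) ∘L β = 1 ∧ α i = (c : ℂ) • β ∧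
      ∀ a : A, (adjoint β) ∘L (xs i a) ∘L β = x a := by
  classical
  intro i
  -- pointwise action identity for the combination
  have hxv : ∀ (b : A) (v : EuclideanSpace ℂ (Fin n)),
      x b v = ∑ j, adjoint (α j) (xs j b (α j v)) := by
    intro b v
    rw [hcomb b]
    simp [ContinuousLinearMap.sum_apply]
  -- Step B : intertwining identity
  have hB : ∀ (a : A) (v : EuclideanSpace ℂ (Fin n)) (j : Fin k),
      xs j a (α j v) = α j (x a v) := by
    intro a v j
    set w := x a v with hw
    have hww : (inner ℂ w w : ℂ).re = ‖w‖ ^ 2 := by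
      simpa using @inner_self_eq_norm_sq ℂ _ _ _ _ w
    have h1 : ∑ j, ‖xs j a (α j v)‖ ^ 2 ≤ ‖w‖ ^ 2 := by
      have e2 : (∑ j, (inner ℂ (xs j (star a * a) (α j v)) (α j v) : ℂ))
          = inner ℂ (x (star a * a) v) v := by
        rw [hxv (star a * a) v, sum_inner]
        exact Finset.sum_congr rfl fun j _ => (adjoint_inner_left _ _ _).symm
      have e3 : (inner ℂ (x (star a * a) v) v : ℂ) = inner ℂ w w := by
        rw [map_mul, map_star, ContinuousLinearMap.mul_apply,
          ContinuousLinearMap.star_eq_adjoint, adjoint_inner_left]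
      calc ∑ j, ‖xs j a (α j v)‖ ^ 2
          ≤ ∑ j, (inner ℂ (xs j (star a * a) (α j v)) (α j v) : ℂ).re :=
            Finset.sum_le_sum fun j _ =>
              cp_schwarz (xs j) (hxs1 j) (hxscp j) a (α j v)
        _ = ((inner ℂ w w : ℂ)).re := by rw [← Complex.re_sum, e2, e3]
        _ = ‖w‖ ^ 2 := hww
    have h2 : (∑ j, (inner ℂ (xs j a (α j v)) (α j w) : ℂ)).re = ‖w‖ ^ 2 := by
      have e : (∑ j, (inner ℂ (xs j a (α j v)) (α j w) : ℂ)) = inner ℂ w w := by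
        calc ∑ j, (inner ℂ (xs j a (α j v)) (α j w) : ℂ)
            = ∑ j, (inner ℂ (adjoint (α j) (xs j a (α j v))) w : ℂ) :=
              Finset.sum_congr rfl fun j _ => (adjoint_inner_left _ _ _).symm
          _ = inner ℂ (∑ j, adjoint (α j) (xs j a (α j v))) w := (sum_inner _ _ _).symm
          _ = inner ℂ w w := by rw [← hxv a v]
      rw [e, hww]
    have h3 : ∑ j, ‖α j w‖ ^ 2 = ‖w‖ ^ 2 := by
      have e : (∑ j, (inner ℂ (α j w) (α j w) : ℂ)) = inner ℂ w w := by
        calc ∑ j, (inner ℂ (α j w) (α j w) : ℂ)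
            = ∑ j, (inner ℂ (adjoint (α j) (α j w)) w : ℂ) :=
              Finset.sum_congr rfl fun j _ => (adjoint_inner_left _ _ _).symm
          _ = inner ℂ ((∑ j, (adjoint (α j)) ∘L (α j)) w) w := by
              rw [ContinuousLinearMap.sum_apply, sum_inner]
              exact Finset.sum_congr rfl fun j _ => rfl
          _ = inner ℂ w w := by rw [hsum]; rfl
      calc ∑ j, ‖α j w‖ ^ 2 = ∑ j, (inner ℂ (α j w) (α j w) : ℂ).re :=
            Finset.sum_congr rfl fun j _ => by
              simpa using (@inner_self_eq_norm_sq ℂ _ _ _ _ (α j w)).symm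
        _ = ((inner ℂ w w : ℂ)).re := by rw [← Complex.re_sum, e]
        _ = ‖w‖ ^ 2 := hww
    have hS : ∑ j, ‖xs j a (α j v) - α j w‖ ^ 2 ≤ 0 := by
      have expand : ∀ j : Fin k, ‖xs j a (α j v) - α j w‖ ^ 2
          = ‖xs j a (α j v)‖ ^ 2 - 2 * (inner ℂ (xs j a (α j v)) (α j w) : ℂ).re
            + ‖α j w‖ ^ 2 := fun j => by
        simpa using @norm_sub_sq ℂ _ _ _ _ (xs j a (α j v)) (α j w)
      have : ∑ j, ‖xs j a (α j v) - α j w‖ ^ 2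
          = (∑ j, ‖xs j a (α j v)‖ ^ 2)
            - 2 * (∑ j, (inner ℂ (xs j a (α j v)) (α j w) : ℂ)).re
            + ∑ j, ‖α j w‖ ^ 2 := by
        rw [Complex.re_sum, Finset.mul_sum]
        rw [← Finset.sum_sub_distrib, ← Finset.sum_add_distrib]
        exact Finset.sum_congr rfl fun j _ => expand j
      rw [this, h2, h3]
      linarith
    have hterm : ‖xs j a (α j v) - α j w‖ ^ 2 = 0 := by
      have hnn : ∀ j ∈ Finset.univ, (0:ℝ) ≤ ‖xs j a (α j v) - α j w‖ ^ 2 :=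
        fun j _ => sq_nonneg _
      exact (Finset.sum_eq_zero_iff_of_nonneg hnn).mp
        (le_antisymm hS (Finset.sum_nonneg hnn)) j (Finset.mem_univ j)
    have := norm_eq_zero.mp ((pow_eq_zero_iff two_ne_zero).mp hterm)
    exact sub_eq_zero.mp this
  have hBop : ∀ (a : A) (j : Fin k), (xs j a) ∘L (α j) = (α j) ∘L (x a) :=
    fun a j => ContinuousLinearMap.ext fun v => hB a v j
  have hadj_x : ∀ a : A, adjoint (x (star a)) = x a := by
    intro a; rw [← ContinuousLinearMap.star_eq_adjoint, ← map_star, star_star]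
  have hadj_xs : ∀ a : A, adjoint (xs i (star a)) = xs i a := by
    intro a; rw [← ContinuousLinearMap.star_eq_adjoint,
      ← cp_star_map (xs i) (hxscp i), star_star]
  have hxadj : ∀ a : A, (x a) ∘L adjoint (α i) = adjoint (α i) ∘L (xs i a) := by
    intro a
    have h := congrArg adjoint (hBop (star a) i)
    rw [adjoint_comp, adjoint_comp, hadj_x, hadj_xs] at h
    exact h.symm
  set T := adjoint (α i) ∘L (α i) with hTdef
  have hcomm : ∀ a : A, (x a) ∘L T = T ∘L (x a) := by
    intro a
    calc (x a) ∘L T = ((x a) ∘L adjoint (α i)) ∘L (α i) :=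
          (ContinuousLinearMap.comp_assoc _ _ _).symm
      _ = (adjoint (α i) ∘L (xs i a)) ∘L (α i) := by rw [hxadj a]
      _ = adjoint (α i) ∘L ((xs i a) ∘L (α i)) := ContinuousLinearMap.comp_assoc _ _ _
      _ = adjoint (α i) ∘L ((α i) ∘L (x a)) := by rw [hBop a i]
      _ = T ∘L (x a) := (ContinuousLinearMap.comp_assoc _ _ _).symm
  -- a vector not killed by α i
  have hne : ∃ v, α i v ≠ 0 := by
    by_contra h; push_neg at h
    exact hα0 i (ContinuousLinearMap.ext fun v => by simpa using h v)
  obtain ⟨v₀, hv₀⟩ := hne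
  have hv0 : v₀ ≠ 0 := fun h => hv₀ (by simp [h])
  haveI : Nontrivial (EuclideanSpace ℂ (Fin n)) := nontrivial_of_ne v₀ 0 hv0
  -- eigenvalue of T
  set Tl : Module.End ℂ (EuclideanSpace ℂ (Fin n)) :=
    (T : EuclideanSpace ℂ (Fin n) →ₗ[ℂ] EuclideanSpace ℂ (Fin n)) with hTl
  obtain ⟨μ, hμ⟩ := Module.End.exists_eigenvalue Tl
  have hE : Module.End.eigenspace Tl μ = ⊤ := by
    rcases hirr (Module.End.eigenspace Tl μ) (fun a v hv => by
      rw [Module.End.mem_eigenspace_iff] at hv ⊢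
      have hcv : T (x a v) = x a (T v) := by
        have := DFunLike.congr_fun (hcomm a) v
        simpa using this.symm
      show T (x a v) = μ • x a v
      rw [hcv, show T v = μ • v from hv, map_smul]) with h | h
    · exact absurd h hμ
    · exact h
  have hTv : ∀ v, T v = μ • v := by
    intro v
    have hv : v ∈ Module.End.eigenspace Tl μ := by rw [hE]; trivial
    exact Module.End.mem_eigenspace_iff.mp hv
  -- identify μ
  have hμval : μ * ((‖v₀‖ : ℂ) ^ 2) = (‖α i v₀‖ : ℂ) ^ 2 := by
    have h1 : (inner ℂ v₀ (T v₀) : ℂ) = μ * (‖v₀‖:ℂ)^2 := by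
      rw [hTv v₀, inner_smul_right, inner_self_eq_norm_sq_to_K]
      try rfl
    have h2 : (inner ℂ v₀ (T v₀) : ℂ) = (‖α i v₀‖:ℂ)^2 := by
      rw [hTdef, ContinuousLinearMap.comp_apply, adjoint_inner_right,
        inner_self_eq_norm_sq_to_K]
      try rfl
    rw [← h1, h2]
  set t : ℝ := ‖α i v₀‖ ^ 2 / ‖v₀‖ ^ 2 with ht
  have htpos : 0 < t :=
    div_pos (pow_pos (norm_pos_iff.mpr hv₀) 2) (pow_pos (norm_pos_iff.mpr hv0) 2)
  have hμt : μ = (t : ℂ) := by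
    have hv2 : ((‖v₀‖:ℂ))^2 ≠ 0 :=
      pow_ne_zero 2 (Complex.ofReal_ne_zero.mpr (norm_ne_zero_iff.mpr hv0))
    have h : μ = ((‖α i v₀‖:ℂ)^2) / ((‖v₀‖:ℂ)^2) := by
      rw [eq_div_iff hv2]; exact hμval
    rw [h, ht]
    push_cast
    ring
  have hT1 : T = (t : ℂ) • (1 : EuclideanSpace ℂ (Fin n) →L[ℂ] EuclideanSpace ℂ (Fin n)) :=
    ContinuousLinearMap.ext fun v => by
      rw [hTv v, hμt]
      simp
  -- the isometry
  have hc : 0 < Real.sqrt t := Real.sqrt_pos.mpr htpos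
  have hc2 : (Real.sqrt t) ^ 2 = t := Real.sq_sqrt htpos.le
  have hcC : ((Real.sqrt t : ℝ) : ℂ) ≠ 0 :=
    Complex.ofReal_ne_zero.mpr hc.ne'
  set z : ℂ := ((Real.sqrt t : ℝ) : ℂ)⁻¹ with hz
  have hadjsmul : ∀ (f : EuclideanSpace ℂ (Fin n) →L[ℂ] EuclideanSpace ℂ (Fin (ns i))),
      adjoint (z • f) = starRingEnd ℂ z • adjoint f := fun f =>
    map_smulₛₗ (adjoint : (EuclideanSpace ℂ (Fin n) →L[ℂ] EuclideanSpace ℂ (Fin (ns i)))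
      ≃ₗᵢ⋆[ℂ] _) z f
  have hzbar : starRingEnd ℂ z = z := by
    rw [hz, map_inv₀, Complex.conj_ofReal]
  have hzz : z * z * (t : ℂ) = 1 := by
    have hrr : (Real.sqrt t)⁻¹ * (Real.sqrt t)⁻¹ * t = 1 := by
      rw [← mul_inv, ← sq, hc2]; exact inv_mul_cancel₀ htpos.ne'
    rw [hz, ← Complex.ofReal_inv, ← Complex.ofReal_mul, ← Complex.ofReal_mul,
      Complex.ofReal_eq_one]
    exact hrr
  refine ⟨Real.sqrt t, z • α i, hc, ?_, ?_, ?_⟩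
  · -- isometry
    rw [hadjsmul, hzbar, ContinuousLinearMap.smul_comp, ContinuousLinearMap.comp_smul,
      ← hTdef, hT1, smul_smul, smul_smul, hzz]
    exact one_smul _ _
  · rw [smul_smul,
      show ((Real.sqrt t : ℝ) : ℂ) * z = 1 from by rw [hz]; exact mul_inv_cancel₀ hcC,
      one_smul]
  · intro a
    have hTx : adjoint (α i) ∘L ((xs i a) ∘L (α i)) = (t:ℂ) • (x a) := by
      rw [hBop a i, ← ContinuousLinearMap.comp_assoc, ← hTdef, hT1]
      ext v
      simp
    rw [hadjsmul, hzbar, ContinuousLinearMap.smul_comp, ContinuousLinearMap.comp_smul,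
      ContinuousLinearMap.comp_smul, hTx, smul_smul, smul_smul, hzz]
    exact one_smul _ _

end
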